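/- Let N = 2n+1 with n ≥ 1, and let t_j = 2π(j−1)/N. Let A_{0,0} and A_{0,k}, B_{0,k}, A_{1,k}, B_{1,k}, A_{2,k}, B_{2,k} (k = 1,…,n) be arbitrary real numbers. Define T(t) = A_{0,0}/2 + Σ_{k=1}^{n} [ a_k cos(kt) + a_{N−k} cos((N−k)t) + a_{N+k} cos((N+k)t) + b_k sin(kt) + b_{N−k} sin((N−k)t) + b_{N+k} sin((N+k)t) ] with a_k = [A_{0,k}(N²−k²) − 2kB_{1,k} + A_{2,k}]/N², b_k = [B_{0,k}(N²−k²) + 2kA_{1,k} + B_{2,k}]/N², a_{N−k} = [A_{0,k}(kN+k²) + B_{1,k}(N+2k) − A_{2,k}]/(2N²), b_{N−k} = [−B_{0,k}(kN+k²) + A_{1,k}(N+2k) + B_{2,k}]/(2N²), a_{N+k} = [A_{0,k}(k²−kN) + B_{1,k}(2k−N) − A_{2,k}]/(2N²), b_{N+k} = [B_{0,k}(k²−kN) + A_{1,k}(N−2k) − B_{2,k}]/(2N²). Then for every integer j: T(t_j) = A_{0,0}/2 + Σ_{k=1}^{n} [A_{0,k} cos(k t_j) + B_{0,k} sin(k t_j)],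 T′(t_j) = Σ_{k=1}^{n} [A_{1,k} cos(k t_j) + B_{1,k} sin(k t_j)], and T″(t_j) = Σ_{k=1}^{n} [A_{2,k} cos(k t_j) + B_{2,k} sin(k t_j)]. -/

import Mathlib

open Real Finset

private lemma hderiv_cos (c m t : ℝ) :
    HasDerivAt (fun s => c * Real.cos (m * s)) ((-(c * m)) * Real.sin (m * t)) t := by
  have h1 : HasDerivAt (fun s : ℝ => m * s) m t := by
    simpa using (hasDerivAt_id t).const_mul m
  have : HasDerivAt (fun s => c * Real.cos (m * s)) (c * (-Real.sin (m * t) * m)) t :=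
    ((Real.hasDerivAt_cos (m * t)).comp t h1).const_mul c
  convert this using 1
  ring

private lemma hderiv_sin (c m t : ℝ) :
    HasDerivAt (fun s => c * Real.sin (m * s)) ((c * m) * Real.cos (m * t)) t := by
  have h1 : HasDerivAt (fun s : ℝ => m * s) m t := by
    simpa using (hasDerivAt_id t).const_mul m
  have : HasDerivAt (fun s => c * Real.sin (m * s)) (c * (Real.cos (m * t) * m)) t :=
    ((Real.hasDerivAt_sin (m * t)).comp t h1).const_mul c
  convert this using 1
  ring

/-- Formula (8) with `I = 0`: the Hermite trigonometric polynomial `T` built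
from the coefficients `A₀ₖ, B₀ₖ`, `A₁ₖ, B₁ₖ`, `A₂ₖ, B₂ₖ` matches, at the nodes
`t_j = 2π(j-1)/N` of the grid `Δ_N^{(0)}`, the values of the trigonometric
polynomials interpolating `f`, `f'` and `f''`. -/
theorem hermite_formula8_grid0 (n : ℕ) (hn : 1 ≤ n) (N : ℕ) (hN : N = 2 * n + 1)
    (A₀ B₀ A₁ B₁ A₂ B₂ : ℕ → ℝ) (a b : ℕ → ℝ)
    (ha : ∀ k ∈ Icc 1 n,
      a k = (A₀ k * ((N : ℝ) ^ 2 - (k : ℝ) ^ 2) - 2 * k * B₁ k + A₂ k) / (N : ℝ) ^ 2 ∧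
      b k = (B₀ k * ((N : ℝ) ^ 2 - (k : ℝ) ^ 2) + 2 * k * A₁ k + B₂ k) / (N : ℝ) ^ 2 ∧
      a (N - k) = (A₀ k * ((k : ℝ) * N + (k : ℝ) ^ 2) + B₁ k * ((N : ℝ) + 2 * k) - A₂ k) /
        (2 * (N : ℝ) ^ 2) ∧
      b (N - k) = (-B₀ k * ((k : ℝ) * N + (k : ℝ) ^ 2) + A₁ k * ((N : ℝ) + 2 * k) + B₂ k) /
        (2 * (N : ℝ) ^ 2) ∧
      a (N + k) = (A₀ k * ((k : ℝ) ^ 2 - (k : ℝ) * N) + B₁ k * (2 * k - (N : ℝ)) - A₂ k) /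
        (2 * (N : ℝ) ^ 2) ∧
      b (N + k) = (B₀ k * ((k : ℝ) ^ 2 - (k : ℝ) * N) + A₁ k * ((N : ℝ) - 2 * k) - B₂ k) /
        (2 * (N : ℝ) ^ 2))
    (T : ℝ → ℝ)
    (hT : ∀ t : ℝ, T t = A₀ 0 / 2 + ∑ k ∈ Icc 1 n,
      (a k * cos ((k : ℝ) * t) + a (N - k) * cos (((N : ℝ) - k) * t) +
       a (N + k) * cos (((N : ℝ) + k) * t) +
       b k * sin ((k : ℝ) * t) + b (N - k) * sin (((N : ℝ) - k) * t) +
       b (N + k) * sin (((N : ℝ) + k) * t)))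
    (j : ℤ) :
    T (2 * π * ((j : ℝ) - 1) / N) = A₀ 0 / 2 + ∑ k ∈ Icc 1 n,
      (A₀ k * cos ((k : ℝ) * (2 * π * ((j : ℝ) - 1) / N)) +
       B₀ k * sin ((k : ℝ) * (2 * π * ((j : ℝ) - 1) / N))) ∧
    deriv T (2 * π * ((j : ℝ) - 1) / N) = ∑ k ∈ Icc 1 n,
      (A₁ k * cos ((k : ℝ) * (2 * π * ((j : ℝ) - 1) / N)) +
       B₁ k * sin ((k : ℝ) * (2 * π * ((j : ℝ) - 1) / N))) ∧
    deriv (deriv T) (2 * π * ((j : ℝ) - 1) / N) = ∑ k ∈ Icc 1 n,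
      (A₂ k * cos ((k : ℝ) * (2 * π * ((j : ℝ) - 1) / N)) +
       B₂ k * sin ((k : ℝ) * (2 * π * ((j : ℝ) - 1) / N))) := by
  have hT' : T = fun t => A₀ 0 / 2 + ∑ k ∈ Icc 1 n,
      (a k * cos ((k : ℝ) * t) + a (N - k) * cos (((N : ℝ) - k) * t) +
       a (N + k) * cos (((N : ℝ) + k) * t) +
       b k * sin ((k : ℝ) * t) + b (N - k) * sin (((N : ℝ) - k) * t) +
       b (N + k) * sin (((N : ℝ) + k) * t)) := funext hT
  subst hT'
  have hNne : (N : ℝ) ≠ 0 := by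
    subst hN; positivity
  set t : ℝ := 2 * π * ((j : ℝ) - 1) / N with ht
  have hNt : (N : ℝ) * t = ((j - 1 : ℤ) : ℝ) * (2 * π) := by
    rw [ht]; push_cast; field_simp
  have hc1 : ∀ m : ℝ, cos (((N : ℝ) - m) * t) = cos (m * t) := by
    intro m
    have h : ((N : ℝ) - m) * t = ((j - 1 : ℤ) : ℝ) * (2 * π) - m * t := by
      rw [← hNt]; ring
    rw [h, Real.cos_int_mul_two_pi_sub]
  have hs1 : ∀ m : ℝ, sin (((N : ℝ) - m) * t) = -sin (m * t) := by
    intro m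
    have h : ((N : ℝ) - m) * t = ((j - 1 : ℤ) : ℝ) * (2 * π) - m * t := by
      rw [← hNt]; ring
    rw [h, Real.sin_int_mul_two_pi_sub]
  have hc2 : ∀ m : ℝ, cos (((N : ℝ) + m) * t) = cos (m * t) := by
    intro m
    have h : ((N : ℝ) + m) * t = m * t + ((j - 1 : ℤ) : ℝ) * (2 * π) := by
      rw [← hNt]; ring
    rw [h, Real.cos_add_int_mul_two_pi]
  have hs2 : ∀ m : ℝ, sin (((N : ℝ) + m) * t) = sin (m * t) := by
    intro m
    have h : ((N : ℝ) + m) * t = m * t + ((j - 1 : ℤ) : ℝ) * (2 * π) := by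
      rw [← hNt]; ring
    rw [h, Real.sin_add_int_mul_two_pi]
  -- first derivative
  have hD1 : ∀ s : ℝ, HasDerivAt (fun u => A₀ 0 / 2 + ∑ k ∈ Icc 1 n,
      (a k * cos ((k : ℝ) * u) + a (N - k) * cos (((N : ℝ) - k) * u) +
       a (N + k) * cos (((N : ℝ) + k) * u) +
       b k * sin ((k : ℝ) * u) + b (N - k) * sin (((N : ℝ) - k) * u) +
       b (N + k) * sin (((N : ℝ) + k) * u)))
      (∑ k ∈ Icc 1 n,
      ((-(a k * k)) * sin ((k : ℝ) * s) + (-(a (N - k) * ((N : ℝ) - k))) * sin (((N : ℝ) - k) * s) +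
       (-(a (N + k) * ((N : ℝ) + k))) * sin (((N : ℝ) + k) * s) +
       (b k * k) * cos ((k : ℝ) * s) + (b (N - k) * ((N : ℝ) - k)) * cos (((N : ℝ) - k) * s) +
       (b (N + k) * ((N : ℝ) + k)) * cos (((N : ℝ) + k) * s))) s := by
    intro s
    refine HasDerivAt.const_add _ (HasDerivAt.fun_sum fun k _ => ?_)
    exact (hderiv_cos (a k) k s).add (hderiv_cos (a (N - k)) ((N : ℝ) - k) s)
      |>.add (hderiv_cos (a (N + k)) ((N : ℝ) + k) s) |>.add (hderiv_sin (b k) k s)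
      |>.add (hderiv_sin (b (N - k)) ((N : ℝ) - k) s)
      |>.add (hderiv_sin (b (N + k)) ((N : ℝ) + k) s)
  have hd1 : deriv (fun u => A₀ 0 / 2 + ∑ k ∈ Icc 1 n,
      (a k * cos ((k : ℝ) * u) + a (N - k) * cos (((N : ℝ) - k) * u) +
       a (N + k) * cos (((N : ℝ) + k) * u) +
       b k * sin ((k : ℝ) * u) + b (N - k) * sin (((N : ℝ) - k) * u) +
       b (N + k) * sin (((N : ℝ) + k) * u)))
      = fun s => ∑ k ∈ Icc 1 n,
      ((-(a k * k)) * sin ((k : ℝ) * s) + (-(a (N - k) * ((N : ℝ) - k))) * sin (((N : ℝ) - k) * s) +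
       (-(a (N + k) * ((N : ℝ) + k))) * sin (((N : ℝ) + k) * s) +
       (b k * k) * cos ((k : ℝ) * s) + (b (N - k) * ((N : ℝ) - k)) * cos (((N : ℝ) - k) * s) +
       (b (N + k) * ((N : ℝ) + k)) * cos (((N : ℝ) + k) * s)) :=
    funext fun s => (hD1 s).deriv
  have hD2 : ∀ s : ℝ, HasDerivAt (fun u => ∑ k ∈ Icc 1 n,
      ((-(a k * k)) * sin ((k : ℝ) * u) + (-(a (N - k) * ((N : ℝ) - k))) * sin (((N : ℝ) - k) * u) +
       (-(a (N + k) * ((N : ℝ) + k))) * sin (((N : ℝ) + k) * u) +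
       (b k * k) * cos ((k : ℝ) * u) + (b (N - k) * ((N : ℝ) - k)) * cos (((N : ℝ) - k) * u) +
       (b (N + k) * ((N : ℝ) + k)) * cos (((N : ℝ) + k) * u)))
      (∑ k ∈ Icc 1 n,
      (((-(a k * k)) * k) * cos ((k : ℝ) * s) +
       ((-(a (N - k) * ((N : ℝ) - k))) * ((N : ℝ) - k)) * cos (((N : ℝ) - k) * s) +
       ((-(a (N + k) * ((N : ℝ) + k))) * ((N : ℝ) + k)) * cos (((N : ℝ) + k) * s) +
       (-((b k * k) * k)) * sin ((k : ℝ) * s) +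
       (-((b (N - k) * ((N : ℝ) - k)) * ((N : ℝ) - k))) * sin (((N : ℝ) - k) * s) +
       (-((b (N + k) * ((N : ℝ) + k)) * ((N : ℝ) + k))) * sin (((N : ℝ) + k) * s))) s := by
    intro s
    refine HasDerivAt.fun_sum fun k _ => ?_
    exact (hderiv_sin (-(a k * k)) k s).add
      (hderiv_sin (-(a (N - k) * ((N : ℝ) - k))) ((N : ℝ) - k) s)
      |>.add (hderiv_sin (-(a (N + k) * ((N : ℝ) + k))) ((N : ℝ) + k) s)
      |>.add (hderiv_cos (b k * k) k s)
      |>.add (hderiv_cos (b (N - k) * ((N : ℝ) - k)) ((N : ℝ) - k) s)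
      |>.add (hderiv_cos (b (N + k) * ((N : ℝ) + k)) ((N : ℝ) + k) s)
  refine ⟨?_, ?_, ?_⟩
  · simp only
    congr 1
    refine Finset.sum_congr rfl fun k hk => ?_
    obtain ⟨e1, e2, e3, e4, e5, e6⟩ := ha k hk
    rw [hc1, hs1, hc2, hs2, e1, e2, e3, e4, e5, e6]
    field_simp
    ring
  · rw [hd1]
    refine Finset.sum_congr rfl fun k hk => ?_
    obtain ⟨e1, e2, e3, e4, e5, e6⟩ := ha k hk
    rw [hc1, hs1, hc2, hs2, e1, e2, e3, e4, e5, e6]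
    field_simp
    ring
  · rw [hd1, (hD2 t).deriv]
    refine Finset.sum_congr rfl fun k hk => ?_
    obtain ⟨e1, e2, e3, e4, e5, e6⟩ := ha k hk
    rw [hc1, hs1, hc2, hs2, e1, e2, e3, e4, e5, e6]
    field_simp
    ring
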